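/- For all k ≤ n there exists a map A : {0,1}^n → ℝ^{k×k} such that for all x, y ∈ {0,1}^n: the Hamming distance dist(x,y) ≥ k if and only if rank(A(x) − A(y)) = k. (That is, HD_{≥k}^n is a symmetric rank problem of order k.) -/

import Mathlib

open Matrix MvPolynomial Finset

noncomputable def ccc {n : ℕ} (x y : Fin n → Bool) (l : Fin n) : ℝ :=
  (if x l then 1 else 0) - (if y l then 1 else 0)

lemma ccc_sq {n : ℕ} {x y : Fin n → Bool} {l : Fin n} (h : x l ≠ y l) :
    ccc x y l * ccc x y l = 1 := by
  cases hx : x l <;> cases hy : y l <;> simp [ccc, hx, hy] at *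

lemma ccc_zero {n : ℕ} {x y : Fin n → Bool} {l : Fin n} (h : x l = y l) :
    ccc x y l = 0 := by simp [ccc, h]

noncomputable def Pm (n k : ℕ) (x y : Fin n → Bool) :
    Matrix (Fin k) (Fin k) (MvPolynomial ((Fin k × Fin n) ⊕ (Fin k × Fin n)) ℝ) :=
  Matrix.of fun i j => ∑ l, MvPolynomial.C (ccc x y l) *
    (MvPolynomial.X (Sum.inl (i, l)) * MvPolynomial.X (Sum.inr (j, l)))

lemma Pm_det_ne_zero {n k : ℕ} {x y : Fin n → Bool} (h : k ≤ hammingDist x y) :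
    (Pm n k x y).det ≠ 0 := by
  classical
  have hD : k ≤ (Finset.univ.filter fun l => x l ≠ y l).card := h
  obtain ⟨s, hs, hcard⟩ := Finset.exists_subset_card_eq hD
  set σ : Fin k → Fin n := fun i => (s.equivFin.symm ⟨i, by rw [hcard]; exact i.isLt⟩ : Fin n)
    with hσ
  have hσmem : ∀ i, σ i ∈ s := fun i => (s.equivFin.symm _).2
  have hσdiff : ∀ i, x (σ i) ≠ y (σ i) := fun i => by
    have := hs (hσmem i); simpa using this
  have hσinj : Function.Injective σ := by
    intro a b hab
    have h1 : (s.equivFin.symm ⟨a, by rw [hcard]; exact a.isLt⟩ : {x // x ∈ s}) =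
        s.equivFin.symm ⟨b, by rw [hcard]; exact b.isLt⟩ := Subtype.ext hab
    have h2 := s.equivFin.symm.injective h1
    simpa [Fin.ext_iff] using congrArg Fin.val h2
  set ρ0 : ((Fin k × Fin n) ⊕ (Fin k × Fin n)) → ℝ := fun v =>
    match v with
    | Sum.inl (i, l) => if σ i = l then ccc x y (σ i) else 0
    | Sum.inr (j, l) => if σ j = l then 1 else 0
    with hρ0
  have hmap : (Pm n k x y).map (MvPolynomial.eval ρ0) = 1 := by
    ext i j
    simp only [Pm, Matrix.map_apply, Matrix.of_apply, map_sum, _root_.map_mul, eval_C, eval_X]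
    by_cases hij : i = j
    · subst hij
      rw [Finset.sum_eq_single (σ i)]
      · simp [hρ0, ccc_sq (hσdiff i)]
      · intro l _ hl
        simp [hρ0, Ne.symm hl]
      · simp
    · rw [Finset.sum_eq_zero]
      · simp [Matrix.one_apply, hij]
      · intro l _
        by_cases h1 : σ i = l
        · have h2 : σ j ≠ l := fun h' => hij (hσinj (h1.trans h'.symm))
          simp [hρ0, h2]
        · simp [hρ0, h1]
  intro hdet
  have h0 : MvPolynomial.eval ρ0 (Pm n k x y).det = 0 := by rw [hdet]; simp
  rw [RingHom.map_det] at h0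
  have h2 : (eval ρ0).mapMatrix (Pm n k x y) = (Pm n k x y).map (eval ρ0) := rfl
  rw [h2, hmap] at h0
  simp at h0

lemma exists_rho (n k : ℕ) :
    ∃ ρ : ((Fin k × Fin n) ⊕ (Fin k × Fin n)) → ℝ,
      ∀ x y : Fin n → Bool, k ≤ hammingDist x y →
        MvPolynomial.eval ρ (Pm n k x y).det ≠ 0 := by
  classical
  set S := Finset.univ.filter
      (fun p : (Fin n → Bool) × (Fin n → Bool) => k ≤ hammingDist p.1 p.2) with hS
  set Q : MvPolynomial ((Fin k × Fin n) ⊕ (Fin k × Fin n)) ℝ :=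
    ∏ p ∈ S, (Pm n k p.1 p.2).det with hQdef
  have hQ : Q ≠ 0 :=
    Finset.prod_ne_zero_iff.mpr fun p hp =>
      Pm_det_ne_zero (by simpa [hS] using (Finset.mem_filter.mp hp).2)
  have hex : ¬ ∀ ρ, MvPolynomial.eval ρ Q = 0 := by
    intro hall
    exact hQ (MvPolynomial.funext fun ρ => by simpa using hall ρ)
  push_neg at hex
  obtain ⟨ρ, hρ⟩ := hex
  refine ⟨ρ, fun x y hxy => ?_⟩
  rw [hQdef, map_prod] at hρ
  exact Finset.prod_ne_zero_iff.mp hρ (x, y) (by simp [hS, hxy])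

theorem stmt9 (n k : ℕ) (hk : k ≤ n) :
    ∃ A : (Fin n → Bool) → Matrix (Fin k) (Fin k) ℝ,
      ∀ x y : Fin n → Bool, k ≤ hammingDist x y ↔ (A x - A y).rank = k := by
  classical
  obtain ⟨ρ, hρ⟩ := exists_rho n k
  set U : Fin k → Fin n → ℝ := fun i l => ρ (Sum.inl (i, l)) with hU
  set V : Fin k → Fin n → ℝ := fun j l => ρ (Sum.inr (j, l)) with hV
  set A : (Fin n → Bool) → Matrix (Fin k) (Fin k) ℝ := fun x =>
    Matrix.of fun i j => ∑ l, (if x l then (1:ℝ) else 0) * (U i l * V j l) with hA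
  refine ⟨A, fun x y => ?_⟩
  have hBentry : ∀ i j, (A x - A y) i j = ∑ l, ccc x y l * (U i l * V j l) := by
    intro i j
    simp [hA, ccc, sub_mul, Finset.sum_sub_distrib]
  constructor
  · intro hdist
    have hmapB : (Pm n k x y).map (MvPolynomial.eval ρ) = A x - A y := by
      ext i j
      rw [hBentry]
      simp [Pm, map_sum, _root_.map_mul, hU, hV]
    have hdet := hρ x y hdist
    rw [RingHom.map_det] at hdet
    have h2 : (eval ρ).mapMatrix (Pm n k x y) = (Pm n k x y).map (eval ρ) := rfl
    rw [h2, hmapB] at hdet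
    have hunit : IsUnit (A x - A y) :=
      (Matrix.isUnit_iff_isUnit_det _).mpr (isUnit_iff_ne_zero.mpr hdet)
    simpa using Matrix.rank_of_isUnit _ hunit
  · intro hrank
    by_contra hdist
    push_neg at hdist
    set D : Finset (Fin n) := Finset.univ.filter (fun l => x l ≠ y l) with hD
    set u : Fin n → (Fin k → ℝ) := fun l i => U i l with hu
    have hrange : LinearMap.range (A x - A y).mulVecLin ≤
        Submodule.span ℝ ((D.image u : Finset (Fin k → ℝ)) : Set (Fin k → ℝ)) := by
      rintro _ ⟨w, rfl⟩
      have hmv : (A x - A y).mulVecLin w =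
          ∑ l ∈ D, (ccc x y l * ∑ j, V j l * w j) • u l := by
        funext i
        simp only [mulVecLin_apply, mulVec, dotProduct, Finset.sum_apply, Pi.smul_apply,
          smul_eq_mul]
        rw [Finset.sum_subset (Finset.subset_univ D)
          (fun l _ hl => by
            have hxy : x l = y l := by simpa [hD] using hl
            simp [ccc_zero hxy])]
        simp only [hBentry, Finset.sum_mul]
        rw [Finset.sum_comm]
        refine Finset.sum_congr rfl fun l _ => ?_
        simp only [Finset.mul_sum, Finset.sum_mul]
        refine Finset.sum_congr rfl fun j _ => ?_
        simp [hu]; ring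
      rw [hmv]
      refine Submodule.sum_mem _ fun l hl => Submodule.smul_mem _ _ (Submodule.subset_span ?_)
      simp only [Finset.coe_image, Set.mem_image, Finset.mem_coe]
      exact ⟨l, hl, rfl⟩
    have h1 : (A x - A y).rank ≤ (D.image u).card :=
      le_trans (Submodule.finrank_mono hrange) (finrank_span_finset_le_card _)
    have h2 : (D.image u).card ≤ D.card := Finset.card_image_le
    have h3 : D.card = hammingDist x y := rfl
    omega
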